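/- arXiv:1906.05457 — 3 statements merged into one kernel-verified Lean document; each statement's English description precedes it below -/
import Mathlib

section
/- Let U : (0,∞) → (0,∞) be continuous, strictly decreasing, with U(ε) → +∞ as ε → 0⁺, such that 1/U is convex, and suppose U is bijective onto its range. Then for every constant C > 0 the pricing function Π(v) = C·U⁻¹(v), defined on the range of U, is arbitrage-free: for all v and v_1,...,v_m in the range of U and reals a_1,...,a_m with Σ a_j = 1 and Σ a_j² v_j ≤ v, Π(v) ≤ Σ_j Π(v_j). -/
open Set Filter Finset

private lemma scale_lemma (U : ℝ → ℝ)
    (hlim : Tendsto U (nhdsWithin 0 (Ioi 0)) atTop)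
    (hconv : ConvexOn ℝ (Ioi 0) (fun ε => 1 / U ε)) :
    ∀ x : ℝ, 0 < x → ∀ t : ℝ, 0 < t → t ≤ 1 → 1 / U (t * x) ≤ t * (1 / U x) := by
  intro x hx t ht ht1
  rcases eq_or_lt_of_le ht1 with rfl | ht1
  · simp
  have hxt : 0 < t * x := mul_pos ht hx
  have hmem : Ioo (0:ℝ) (t * x) ∈ nhdsWithin (0:ℝ) (Ioi 0) :=
    Ioo_mem_nhdsGT_of_mem ⟨le_refl _, hxt⟩
  have hev : ∀ᶠ δ in nhdsWithin (0:ℝ) (Ioi 0),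
      1 / U (t * x) ≤ ((t*x - δ)/(x - δ)) * (1 / U x) + (1 - (t*x - δ)/(x - δ)) * (1 / U δ) := by
    filter_upwards [hmem] with δ hδ
    have hδ0 : 0 < δ := hδ.1
    have hδtx : δ < t * x := hδ.2
    have hδx : δ < x := hδtx.trans_le (by nlinarith)
    have hden : 0 < x - δ := by linarith
    set θ := (t*x - δ)/(x - δ) with hθdef
    have hθ0 : 0 ≤ θ := div_nonneg (by linarith) hden.le
    have hθ1 : θ ≤ 1 := by
      rw [div_le_one hden]; nlinarith
    have hcomb := hconv.2 (mem_Ioi.2 hx) (mem_Ioi.2 hδ0)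
      hθ0 (sub_nonneg.2 hθ1) (by ring : θ + (1 - θ) = 1)
    have hpt : θ • x + (1 - θ) • δ = t * x := by
      simp only [smul_eq_mul, hθdef]
      field_simp
      ring
    rw [hpt] at hcomb
    simpa [smul_eq_mul] using hcomb
  have hθt : Tendsto (fun δ : ℝ => (t*x - δ)/(x - δ)) (nhdsWithin (0:ℝ) (Ioi 0)) (nhds t) := by
    have h1 : Tendsto (fun δ : ℝ => (t*x - δ)/(x - δ)) (nhds 0) (nhds ((t*x - 0)/(x - 0))) := by
      apply Tendsto.div
      · exact (tendsto_const_nhds.sub tendsto_id)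
      · exact (tendsto_const_nhds.sub tendsto_id)
      · simpa using hx.ne'
    have h2 := h1.mono_left (nhdsWithin_le_nhds (s := Ioi (0:ℝ)))
    have : (t*x - 0)/(x - 0) = t := by rw [sub_zero, sub_zero, mul_div_cancel_right₀ _ hx.ne']
    rwa [this] at h2
  have hg0 : Tendsto (fun δ : ℝ => 1 / U δ) (nhdsWithin (0:ℝ) (Ioi 0)) (nhds 0) := by
    simp only [one_div]; exact hlim.inv_tendsto_atTop
  have hlimrhs : Tendsto (fun δ : ℝ => ((t*x - δ)/(x - δ)) * (1 / U x)
      + (1 - (t*x - δ)/(x - δ)) * (1 / U δ)) (nhdsWithin (0:ℝ) (Ioi 0))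
      (nhds (t * (1 / U x))) := by
    have hA := hθt.mul_const (1 / U x)
    have hB := ((tendsto_const_nhds (x := (1:ℝ))).sub hθt).mul hg0
    have hAB := hA.add hB
    simpa using hAB
  exact ge_of_tendsto hlimrhs hev

theorem inverse_utility_pricing_arbitrageFree (U : ℝ → ℝ)
    (hcont : ContinuousOn U (Ioi 0))
    (hanti : StrictAntiOn U (Ioi 0))
    (hpos : ∀ ε ∈ Ioi (0 : ℝ), 0 < U ε)
    (hlim : Tendsto U (nhdsWithin 0 (Ioi 0)) atTop)
    (hconv : ConvexOn ℝ (Ioi 0) (fun ε => 1 / U ε))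
    (hbij : InjOn U (Ioi 0))
    (C : ℝ) (hC : 0 < C) :
    ∀ (m : ℕ) (v : ℝ) (vs a : Fin m → ℝ),
      v ∈ U '' Ioi 0 → (∀ j, vs j ∈ U '' Ioi 0) →
      (∑ j, a j) = 1 → (∑ j, (a j) ^ 2 * vs j) ≤ v →
      C * Function.invFunOn U (Ioi 0) v ≤ ∑ j, C * Function.invFunOn U (Ioi 0) (vs j) := by
  -- superadditivity of 1/U
  have hsuper : ∀ x y : ℝ, 0 < x → 0 < y → 1 / U x + 1 / U y ≤ 1 / U (x + y) := by
    intro x y hx hy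
    have hxy : 0 < x + y := by linarith
    have h1 := scale_lemma U hlim hconv (x + y) hxy (x / (x + y))
      (div_pos hx hxy) (by rw [div_le_one hxy]; linarith)
    have h2 := scale_lemma U hlim hconv (x + y) hxy (y / (x + y))
      (div_pos hy hxy) (by rw [div_le_one hxy]; linarith)
    rw [div_mul_cancel₀ _ hxy.ne'] at h1 h2
    have := add_le_add h1 h2
    calc 1 / U x + 1 / U y ≤ x / (x + y) * (1 / U (x + y)) + y / (x + y) * (1 / U (x + y)) := this
      _ = 1 / U (x + y) := by
          rw [← add_mul, ← add_div, div_self hxy.ne', one_mul]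
  intro m v vs a hv hvs hsum1 hle
  -- extract preimages
  obtain ⟨ε, hε, hεv⟩ := hv
  choose e he hev using hvs
  -- invFunOn facts
  have hinv : Function.invFunOn U (Ioi 0) v = ε := by
    refine hbij (Function.invFunOn_mem ⟨ε, hε, hεv⟩) hε ?_
    rw [Function.invFunOn_eq (f := U) ⟨ε, hε, hεv⟩]
    exact hεv.symm
  have hinvj : ∀ j, Function.invFunOn U (Ioi 0) (vs j) = e j := by
    intro j
    refine hbij (Function.invFunOn_mem ⟨e j, he j, hev j⟩) (he j) ?_
    rw [Function.invFunOn_eq (f := U) ⟨e j, he j, hev j⟩]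
    exact (hev j).symm
  rw [hinv]
  simp only [hinvj]
  -- m ≠ 0
  have hm : m ≠ 0 := by
    rintro rfl
    simp at hsum1
  have hne : (univ : Finset (Fin m)).Nonempty := univ_nonempty_iff.2 (Fin.pos_iff_nonempty.1 (Nat.pos_of_ne_zero hm))
  -- s := sum of e
  set s := ∑ j, e j with hsdef
  have hs : 0 < s := Finset.sum_pos (fun j _ => mem_Ioi.1 (he j)) hne
  -- superadditivity over the sum
  have hsumsuper : ∀ (t : Finset (Fin m)), t.Nonempty →
      ∑ j ∈ t, 1 / U (e j) ≤ 1 / U (∑ j ∈ t, e j) := by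
    intro t
    induction t using Finset.cons_induction with
    | empty => intro h; exact absurd h (by simp)
    | cons i t hi ih =>
      intro _
      rcases t.eq_empty_or_nonempty with rfl | hte
      · simp
      have hts : 0 < ∑ j ∈ t, e j := Finset.sum_pos (fun j _ => mem_Ioi.1 (he j)) hte
      rw [Finset.sum_cons, Finset.sum_cons]
      calc 1 / U (e i) + ∑ j ∈ t, 1 / U (e j) ≤ 1 / U (e i) + 1 / U (∑ j ∈ t, e j) := by
            linarith [ih hte]
        _ ≤ 1 / U (e i + ∑ j ∈ t, e j) := hsuper _ _ (mem_Ioi.1 (he i)) hts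
  have hT : ∑ j, 1 / U (e j) ≤ 1 / U s := hsumsuper univ hne
  have hTpos : 0 < ∑ j, 1 / U (e j) :=
    Finset.sum_pos (fun j _ => one_div_pos.2 (hpos _ (he j))) hne
  -- Cauchy-Schwarz (Sedrakyan)
  have hcs := sq_sum_div_le_sum_sq_div (univ : Finset (Fin m)) a
    (g := fun j => 1 / U (e j)) (fun j _ => one_div_pos.2 (hpos _ (he j)))
  rw [hsum1, one_pow] at hcs
  have hUs : 0 < U s := hpos s hs
  have hεpos : 0 < ε := mem_Ioi.1 hε
  have h1 : U s ≤ 1 / ∑ j, 1 / U (e j) := by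
    rw [le_one_div hUs hTpos]
    exact hT
  have h2 : 1 / ∑ j, 1 / U (e j) ≤ ∑ j, (a j) ^ 2 * U (e j) := by
    calc 1 / ∑ j, 1 / U (e j) ≤ ∑ j, a j ^ 2 / (1 / U (e j)) := hcs
      _ = ∑ j, (a j) ^ 2 * U (e j) := by
          apply Finset.sum_congr rfl
          intro j _
          rw [one_div, div_inv_eq_mul]
  have h3 : ∑ j, (a j) ^ 2 * U (e j) ≤ U ε := by
    rw [hεv]
    calc ∑ j, (a j) ^ 2 * U (e j) = ∑ j, (a j) ^ 2 * vs j := by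
          apply Finset.sum_congr rfl
          intro j _
          rw [hev j]
      _ ≤ v := hle
  have hUsε : U s ≤ U ε := le_trans h1 (le_trans h2 h3)
  have hεs : ε ≤ s := by
    by_contra h
    push_neg at h
    exact absurd (hanti hs hε h) (not_lt.2 hUsε)
  rw [← Finset.mul_sum]
  exact mul_le_mul_of_nonneg_left hεs hC.le
end

section
/- Privacy amplification by sampling: let M be a mechanism satisfying ε-differential privacy, and let S be the mechanism that first includes each data point independently with probability β ∈ (0,1] (replacing unincluded points so databases remain comparable) and then runs M on the sampled database. Then for any two databases D, D' differing in one user's data point and any output o, Pr[S(D) = o] ≤ e^{ε'}·Pr[S(D') = o] where ε' = ln(1 + β(e^{ε} − 1)). In particular, choosing β_i = (e^{ε_i} − 1)/(e^{ε_max} − 1) for user u_i and running an ε_max-DP mechanism gives user u_i privacy loss exactly ε_i. -/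
open Finset

/-- `M` satisfies `ε`-differential privacy (neighboring databases differ in at most
one user's data point, via replacement). -/
def SatisfiesDP {User Data O : Type*} (M : (User → Data) → PMF O) (ε : ℝ) : Prop :=
  ∀ (i : User) (D D' : User → Data), (∀ j, j ≠ i → D j = D' j) →
    ∀ o : O, M D o ≤ ENNReal.ofReal (Real.exp ε) * M D' o

/-- Output distribution (as a function assigning probabilities to outputs) of the
sampled mechanism: each data point is included independently with probability `β`,
unincluded points are replaced by the corresponding point of a fixed default
database `D₀` (so that databases remain comparable), and then `M` is run. -/
noncomputable def sampleMech {User Data O : Type*} [Fintype User] [DecidableEq User]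
    (M : (User → Data) → PMF O) (β : ℝ) (D₀ : User → Data)
    (D : User → Data) (o : O) : ENNReal :=
  ∑ b : User → Bool,
    (∏ j, if b j then ENNReal.ofReal β else ENNReal.ofReal (1 - β)) *
      M (fun j => if b j then D j else D₀ j) o

section Aux

variable {User Data O : Type*} [Fintype User] [DecidableEq User]

/-- Database obtained by fixing the sampling decision at `i` to `v` and using `c`
elsewhere. -/
def extDB (D₀ D : User → Data) (i : User) (v : Bool)
    (c : {j : User // j ≠ i} → Bool) : User → Data :=
  fun j => if h : j = i then (if v then D j else D₀ j) else (if c ⟨j, h⟩ then D j else D₀ j)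

/-- Partial sum of the sampled mechanism, with the sampling decision at `i` fixed. -/
noncomputable def partSum (M : (User → Data) → PMF O) (β : ℝ) (D₀ D : User → Data)
    (i : User) (v : Bool) (o : O) : ENNReal :=
  ∑ c : {j : User // j ≠ i} → Bool,
    (∏ x, if c x then ENNReal.ofReal β else ENNReal.ofReal (1 - β)) *
      M (extDB D₀ D i v c) o

lemma sample_decomp (M : (User → Data) → PMF O) (β : ℝ) (D₀ D : User → Data)
    (i : User) (o : O) :
    sampleMech M β D₀ D o =
      ENNReal.ofReal β * partSum M β D₀ D i true o +
        ENNReal.ofReal (1 - β) * partSum M β D₀ D i false o := by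
  classical
  rw [sampleMech,
    ← Equiv.sum_comp (Equiv.funSplitAt i Bool).symm
      (fun b => (∏ j, if b j then ENNReal.ofReal β else ENNReal.ofReal (1 - β)) *
        M (fun j => if b j then D j else D₀ j) o),
    Fintype.sum_prod_type, Fintype.sum_bool]
  have key : ∀ (v : Bool) (c : {j : User // j ≠ i} → Bool),
      (∏ j, if (Equiv.funSplitAt i Bool).symm (v, c) j then ENNReal.ofReal β
          else ENNReal.ofReal (1 - β)) *
        M (fun j => if (Equiv.funSplitAt i Bool).symm (v, c) j then D j else D₀ j) o =
      (if v then ENNReal.ofReal β else ENNReal.ofReal (1 - β)) *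
        ((∏ x, if c x then ENNReal.ofReal β else ENNReal.ofReal (1 - β)) *
          M (extDB D₀ D i v c) o) := by
    intro v c
    have hb : ∀ j, (Equiv.funSplitAt i Bool).symm (v, c) j =
        if h : j = i then v else c ⟨j, h⟩ := by
      intro j
      by_cases h : j = i
      · subst h; simp [Equiv.funSplitAt, Equiv.piSplitAt]
      · simp [Equiv.funSplitAt, Equiv.piSplitAt, h]
    have h1 : (∏ j, if (Equiv.funSplitAt i Bool).symm (v, c) j then ENNReal.ofReal β
        else ENNReal.ofReal (1 - β)) =
        (if v then ENNReal.ofReal β else ENNReal.ofReal (1 - β)) *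
          ∏ x : {j : User // j ≠ i},
            if c x then ENNReal.ofReal β else ENNReal.ofReal (1 - β) := by
      rw [← Finset.mul_prod_erase Finset.univ _ (Finset.mem_univ i)]
      congr 1
      · rw [hb i]; simp
      · rw [Finset.prod_subtype (Finset.univ.erase i)
          (p := fun j => j ≠ i) (by simp)]
        refine Finset.prod_congr rfl fun x _ => ?_
        rw [hb x.1, dif_neg x.2]
    have h2 : (fun j => if (Equiv.funSplitAt i Bool).symm (v, c) j then D j else D₀ j) =
        extDB D₀ D i v c := by
      funext j
      rw [hb j, extDB]
      by_cases h : j = i <;> simp [h]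
    rw [h1, h2, mul_assoc]
  rw [Finset.sum_congr rfl (fun c _ => key true c),
    Finset.sum_congr rfl (fun c _ => key false c)]
  simp [partSum, Finset.mul_sum]

lemma final_arith (T T' U' E : ENNReal) (β γ ceps c : ℝ)
    (hβ0 : 0 ≤ β) (hβ1 : β ≤ 1) (hγ0 : 0 ≤ γ) (hγ1 : γ ≤ 1)
    (hE : E = ENNReal.ofReal ceps) (hceps : 0 ≤ ceps) (hc0 : 0 ≤ c)
    (h1 : β * γ * ceps = c * β) (h2 : β * (1 - γ) * ceps + (1 - β) = c * (1 - β))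
    (hT1 : T ≤ E * T') (hT2 : T ≤ E * U') :
    ENNReal.ofReal β * T + ENNReal.ofReal (1 - β) * U' ≤
      ENNReal.ofReal c * (ENNReal.ofReal β * T' + ENNReal.ofReal (1 - β) * U') := by
  have hT : T ≤ ENNReal.ofReal γ * (E * T') + ENNReal.ofReal (1 - γ) * (E * U') := by
    calc T = (ENNReal.ofReal γ + ENNReal.ofReal (1 - γ)) * T := by
            rw [← ENNReal.ofReal_add hγ0 (by linarith)]
            norm_num
      _ = ENNReal.ofReal γ * T + ENNReal.ofReal (1 - γ) * T := add_mul _ _ _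
      _ ≤ _ := add_le_add (mul_le_mul_right hT1 _) (mul_le_mul_right hT2 _)
  calc ENNReal.ofReal β * T + ENNReal.ofReal (1 - β) * U'
      ≤ ENNReal.ofReal β *
          (ENNReal.ofReal γ * (E * T') + ENNReal.ofReal (1 - γ) * (E * U'))
          + ENNReal.ofReal (1 - β) * U' :=
        add_le_add_left (mul_le_mul_right hT _) _
    _ = ENNReal.ofReal (β * γ * ceps) * T' +
          ENNReal.ofReal (β * (1 - γ) * ceps + (1 - β)) * U' := by
        subst hE
        rw [ENNReal.ofReal_add (mul_nonneg (mul_nonneg hβ0 (by linarith)) hceps)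
          (by linarith),
          ENNReal.ofReal_mul (mul_nonneg hβ0 hγ0), ENNReal.ofReal_mul hβ0,
          ENNReal.ofReal_mul (mul_nonneg hβ0 (by linarith)), ENNReal.ofReal_mul hβ0]
        ring
    _ = ENNReal.ofReal (c * β) * T' + ENNReal.ofReal (c * (1 - β)) * U' := by
        rw [h1, h2]
    _ = ENNReal.ofReal c * (ENNReal.ofReal β * T' + ENNReal.ofReal (1 - β) * U') := by
        rw [ENNReal.ofReal_mul hc0, ENNReal.ofReal_mul hc0]
        ring

end Aux

theorem privacy_amplification_by_sampling {User Data O : Type*}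
    [Fintype User] [DecidableEq User]
    (M : (User → Data) → PMF O) (ε : ℝ) (hε : 0 < ε) (hM : SatisfiesDP M ε)
    (β : ℝ) (hβ0 : 0 < β) (hβ1 : β ≤ 1) (D₀ : User → Data) :
    (∀ (i : User) (D D' : User → Data), (∀ j, j ≠ i → D j = D' j) →
        ∀ o : O, sampleMech M β D₀ D o ≤
          ENNReal.ofReal (Real.exp (Real.log (1 + β * (Real.exp ε - 1)))) *
            sampleMech M β D₀ D' o) ∧
    (∀ εi εmax : ℝ, 0 < εi → εi ≤ εmax →
        Real.log (1 + (Real.exp εi - 1) / (Real.exp εmax - 1) * (Real.exp εmax - 1)) = εi) := by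
  have hexp : (1 : ℝ) < Real.exp ε := by
    rw [show (1:ℝ) = Real.exp 0 by simp]
    exact Real.exp_lt_exp.mpr hε
  constructor
  · intro i D D' hDD' o
    have hc0 : (0:ℝ) < 1 + β * (Real.exp ε - 1) := by nlinarith
    rw [Real.exp_log hc0]
    rw [sample_decomp M β D₀ D i o, sample_decomp M β D₀ D' i o]
    have hU : partSum M β D₀ D i false o = partSum M β D₀ D' i false o := by
      rw [partSum, partSum]
      refine Finset.sum_congr rfl fun cc _ => ?_
      have hdb : extDB D₀ D i false cc = extDB D₀ D' i false cc := by
        funext j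
        rw [extDB, extDB]
        by_cases h : j = i
        · simp [h]
        · simp only [dif_neg h]
          rw [hDD' j h]
      rw [hdb]
    have hT1 : partSum M β D₀ D i true o ≤
        ENNReal.ofReal (Real.exp ε) * partSum M β D₀ D' i true o := by
      rw [partSum, partSum, Finset.mul_sum]
      refine Finset.sum_le_sum fun cc _ => ?_
      rw [mul_left_comm]
      refine mul_le_mul_right (hM i _ _ (fun j hj => ?_) o) _
      rw [extDB, extDB, dif_neg hj, dif_neg hj, hDD' j hj]
    have hT2 : partSum M β D₀ D i true o ≤
        ENNReal.ofReal (Real.exp ε) * partSum M β D₀ D' i false o := by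
      rw [partSum, partSum, Finset.mul_sum]
      refine Finset.sum_le_sum fun cc _ => ?_
      rw [mul_left_comm]
      refine mul_le_mul_right (hM i _ _ (fun j hj => ?_) o) _
      rw [extDB, extDB, dif_neg hj, dif_neg hj, hDD' j hj]
    rw [hU]
    have hepos : (0:ℝ) < Real.exp ε := Real.exp_pos ε
    refine final_arith _ _ _ _ β ((1 + β * (Real.exp ε - 1)) / Real.exp ε)
      (Real.exp ε) (1 + β * (Real.exp ε - 1)) hβ0.le hβ1 (by positivity)
      ?_ rfl hepos.le hc0.le ?_ ?_ hT1 hT2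
    · rw [div_le_one hepos]; nlinarith
    · field_simp
    · field_simp
      ring
  · intro εi εmax h1 h2
    have h3 : Real.exp εmax - 1 ≠ 0 := by
      have : (1 : ℝ) < Real.exp εmax := by
        rw [show (1:ℝ) = Real.exp 0 by simp]
        exact Real.exp_lt_exp.mpr (lt_of_lt_of_le h1 h2)
      linarith
    rw [div_mul_cancel₀ _ h3, show 1 + (Real.exp εi - 1) = Real.exp εi by ring,
      Real.log_exp]
end

section
/- Consider n = 50, pattern ρ = (0.5, 0.5, ..., 0.5, 1) (49 entries equal to 0.5 and one equal to 1), Δ = 2, and the patterned Sample utility U(ε) = 49·x(ε)(1 − x(ε)) + 2(Δ/ε)² where x(ε) = (e^{0.5ε} − 1)/(e^{ε} − 1). Then there exist ε₁ > ε₂ > 0 such that U(ε₂) = 2·U(ε₁) but Σ_i ρ_i·ε₂ < (1/2)·Σ_i ρ_i·ε₁; that is, two copies of the cheaper answer at variance U(ε₂) can be averaged to achieve variance U(ε₁) at strictly less than the price of the answer at variance U(ε₁), so the induced pricing function Π(v) = C·Σ_i ρ_i·U⁻¹(v) (C > 0 constant) is not arbitrage-free. -/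
open Finset

noncomputable def xSam (ε : ℝ) : ℝ := (Real.exp (0.5 * ε) - 1) / (Real.exp ε - 1)
noncomputable def USam (ε : ℝ) : ℝ := 49 * xSam ε * (1 - xSam ε) + 2 * ((2 : ℝ) / ε) ^ 2
noncomputable def ρEx (i : Fin 50) : ℝ := if (i : ℕ) = 49 then 1 else 0.5

lemma auxZ {a : ℝ} (h1 : (0.377:ℝ) < a) (h2 : a < 0.378) : a * (1 - a) < 0.2355 := by
  nlinarith

lemma auxU1 {z y : ℝ} (hz : z * (1 - z) < 0.2355) (hy : (0.1965:ℝ) < y * (1 - y)) :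
    49 * z * (1 - z) + 8 < 2 * (49 * y * (1 - y) + 2) := by nlinarith

lemma auxU2 {x y : ℝ} (hx0 : 0 ≤ x) (hx1 : x ≤ 1) :
    2 * (49 * y * (1 - y) + 2) < 49 * x * (1 - x) + 32 := by
  nlinarith [sq_nonneg (y - 1/2), mul_nonneg hx0 (by linarith : (0:ℝ) ≤ 1 - x)]

lemma auxY {a : ℝ} (h1 : (0.2689:ℝ) < a) (h2 : a < 0.269) : (0.1965:ℝ) < a * (1 - a) := by
  nlinarith

theorem sample_pricing_not_arbitrageFree :
    ∃ ε₁ ε₂ : ℝ, 0 < ε₂ ∧ ε₂ < ε₁ ∧ USam ε₂ = 2 * USam ε₁ ∧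
      (∑ i : Fin 50, ρEx i * ε₂) < (1 / 2) * ∑ i : Fin 50, ρEx i * ε₁ := by
  have he1 : (2.7182818283:ℝ) < Real.exp 1 := Real.exp_one_gt_d9
  have he2 : Real.exp 1 < 2.7182818286 := Real.exp_one_lt_d9
  have hssq : Real.exp 0.5 * Real.exp 0.5 = Real.exp 1 := by
    rw [← Real.exp_add]; norm_num
  have hs0 : (0:ℝ) < Real.exp 0.5 := Real.exp_pos _
  have hs1 : (1.6487:ℝ) < Real.exp 0.5 := by nlinarith
  have hs2 : Real.exp 0.5 < 1.6488 := by nlinarith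
  have he2eq : Real.exp 2 = Real.exp 1 * Real.exp 1 := by
    rw [← Real.exp_add]; norm_num
  have he0 : (1:ℝ) < Real.exp 1 := by linarith
  -- xSam values
  have hy : xSam 2 = (Real.exp 1 - 1) / (Real.exp 1 * Real.exp 1 - 1) := by
    unfold xSam; rw [he2eq]; norm_num
  have hz : xSam 1 = (Real.exp 0.5 - 1) / (Real.exp 1 - 1) := by
    unfold xSam; norm_num
  have hdenY : (0:ℝ) < Real.exp 1 * Real.exp 1 - 1 := by nlinarith
  have hdenZ : (0:ℝ) < Real.exp 1 - 1 := by linarith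
  have hy1 : (0.2689:ℝ) < xSam 2 := by
    rw [hy, lt_div_iff₀ hdenY]; nlinarith
  have hy2 : xSam 2 < 0.269 := by
    rw [hy, div_lt_iff₀ hdenY]; nlinarith
  have hz1 : (0.377:ℝ) < xSam 1 := by
    rw [hz, lt_div_iff₀ hdenZ]; nlinarith
  have hz2 : xSam 1 < 0.378 := by
    rw [hz, div_lt_iff₀ hdenZ]; nlinarith
  -- x = xSam 0.5 bounds: 0 ≤ x ≤ 1
  have hq : xSam 0.5 = (Real.exp 0.25 - 1) / (Real.exp 0.5 - 1) := by
    unfold xSam; norm_num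
  have hq0 : (1:ℝ) < Real.exp 0.25 := by
    have := Real.add_one_lt_exp (x := 0.25) (by norm_num); linarith
  have hq1 : Real.exp 0.25 < Real.exp 0.5 := Real.exp_lt_exp.mpr (by norm_num)
  have hx0 : 0 ≤ xSam 0.5 := by
    rw [hq]; apply div_nonneg <;> linarith
  have hx1 : xSam 0.5 ≤ 1 := by
    rw [hq, div_le_one (by linarith)]; linarith
  -- value inequalities
  have hU2 : USam 2 = 49 * xSam 2 * (1 - xSam 2) + 2 := by
    unfold USam; norm_num
  have hUhq : USam 0.5 = 49 * xSam 0.5 * (1 - xSam 0.5) + 32 := by unfold USam; norm_num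
  have hUhalf : 2 * USam 2 < USam 0.5 := by
    rw [hUhq, hU2]; exact auxU2 hx0 hx1
  have hUz : xSam 1 * (1 - xSam 1) < 0.2355 := auxZ hz1 hz2
  have hUy : (0.1965:ℝ) < xSam 2 * (1 - xSam 2) := auxY hy1 hy2
  have hU1eq : USam 1 = 49 * xSam 1 * (1 - xSam 1) + 8 := by unfold USam; norm_num
  have hU1 : USam 1 < 2 * USam 2 := by
    rw [hU1eq, hU2]; exact auxU1 hUz hUy
  -- continuity on [0.5, 1]
  have hconts : ContinuousOn USam (Set.Icc (0.5:ℝ) 1) := by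
    unfold USam xSam
    have hne : ∀ x ∈ Set.Icc (0.5:ℝ) 1, Real.exp x - 1 ≠ 0 := by
      intro x hx
      have h1 : (1:ℝ) < Real.exp x := by
        calc (1:ℝ) < Real.exp 0.5 := by linarith
        _ ≤ Real.exp x := Real.exp_le_exp.mpr hx.1
      linarith
    have hne0 : ∀ x ∈ Set.Icc (0.5:ℝ) 1, x ≠ 0 := by
      intro x hx; intro h; rw [h] at hx; norm_num at hx
    apply ContinuousOn.add
    · apply ContinuousOn.mul
      · apply ContinuousOn.mul continuousOn_const
        exact ContinuousOn.div (by fun_prop) (by fun_prop) hne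
      · apply ContinuousOn.sub continuousOn_const
        exact ContinuousOn.div (by fun_prop) (by fun_prop) hne
    · apply ContinuousOn.mul continuousOn_const
      apply ContinuousOn.pow
      exact ContinuousOn.div continuousOn_const continuousOn_id hne0
  -- IVT
  have hmem : 2 * USam 2 ∈ Set.Icc (USam 1) (USam 0.5) := ⟨le_of_lt hU1, le_of_lt hUhalf⟩
  obtain ⟨c, hc, hct⟩ := intermediate_value_Icc' (by norm_num : (0.5:ℝ) ≤ 1) hconts hmem
  have hcne : c ≠ 1 := by
    intro h; rw [h] at hct; linarith
  have hclt : c < 1 := lt_of_le_of_ne hc.2 hcne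
  have hsum : ∀ ε : ℝ, ∑ i : Fin 50, ρEx i * ε = 25.5 * ε := by
    intro ε
    rw [← Finset.sum_mul]
    congr 1
    simp [ρEx, Fin.sum_univ_succ]
    norm_num
  refine ⟨2, c, by linarith [hc.1], by linarith [hc.2], hct, ?_⟩
  rw [hsum, hsum]
  linarith
end
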